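/- For every parity game G whose priorities lie in {q,...,0} with q even and every natural number n: if Even has a winning strategy in G, then Even has a winning strategy in the n-challenge game on G. -/

import Mathlib

namespace MuCalc

/-- Formulas of the modal mu-calculus in guarded positive form. Propositional
variables and fixpoint variables are represented by natural numbers. -/
inductive Formula (Act : Type) : Type where
  | tt : Formula Act
  | ff : Formula Act
  | prop (P : ℕ) : Formula Act
  | nprop (P : ℕ) : Formula Act
  | var (X : ℕ) : Formula Act
  | and (φ ψ : Formula Act) : Formula Act
  | or (φ ψ : Formula Act) : Formula Act
  | dia (a : Act) (φ : Formula Act) : Formula Act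
  | box (a : Act) (φ : Formula Act) : Formula Act
  | mu (X : ℕ) (φ : Formula Act) : Formula Act
  | nu (X : ℕ) (φ : Formula Act) : Formula Act
  deriving DecidableEq

/-- A labelled transition system with a distinguished initial state. -/
structure LTS (Act : Type) where
  State : Type
  init : State
  trans : State → Act → State → Prop
  val : State → ℕ → Prop

/-- Knaster–Tarski semantics of the modal mu-calculus. -/
def sem {Act : Type} (M : LTS Act) : Formula Act → (ℕ → Set M.State) → Set M.State
  | .tt, _ => Set.univ
  | .ff, _ => ∅
  | .prop P, _ => {s | M.val s P}
  | .nprop P, _ => {s | ¬ M.val s P}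
  | .var X, ρ => ρ X
  | .and φ ψ, ρ => sem M φ ρ ∩ sem M ψ ρ
  | .or φ ψ, ρ => sem M φ ρ ∪ sem M ψ ρ
  | .dia a φ, ρ => {s | ∃ t, M.trans s a t ∧ t ∈ sem M φ ρ}
  | .box a φ, ρ => {s | ∀ t, M.trans s a t → t ∈ sem M φ ρ}
  | .mu X φ, ρ => ⋂₀ {T | sem M φ (Function.update ρ X T) ⊆ T}
  | .nu X φ, ρ => ⋃₀ {T | T ⊆ sem M φ (Function.update ρ X T)}

/-- `M ⊨ φ`: the formula holds at the initial state. -/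
def Sat {Act : Type} (M : LTS Act) (φ : Formula Act) : Prop :=
  M.init ∈ sem M φ (fun _ => ∅)

/-- Two formulas are equivalent if they hold in exactly the same structures. -/
def FEquiv {Act : Type} (φ ψ : Formula Act) : Prop :=
  ∀ M : LTS Act, Sat M φ ↔ Sat M ψ

/-- Free (fixpoint) variables of a formula. -/
def freeVars {Act : Type} : Formula Act → Set ℕ
  | .var X => {X}
  | .and φ ψ | .or φ ψ => freeVars φ ∪ freeVars ψ
  | .dia _ φ | .box _ φ => freeVars φ
  | .mu X φ | .nu X φ => freeVars φ \ {X}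
  | _ => ∅

/-- Fixpoint variables bound in a formula. -/
def fixVars {Act : Type} : Formula Act → Set ℕ
  | .and φ ψ | .or φ ψ => fixVars φ ∪ fixVars ψ
  | .dia _ φ | .box _ φ => fixVars φ
  | .mu X φ | .nu X φ => insert X (fixVars φ)
  | _ => ∅

/-- `PA Ω φ`: `Ω` is a valid priority assignment for `φ`: μ-bound variables get odd
priorities, ν-bound variables get even priorities, and any variable free in the
binding formula of `X` gets a priority at least `Ω X`. -/
def PA {Act : Type} (Ω : ℕ → ℕ) : Formula Act → Prop
  | .and φ ψ | .or φ ψ => PA Ω φ ∧ PA Ω ψ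
  | .dia _ φ | .box _ φ => PA Ω φ
  | .mu X φ => Odd (Ω X) ∧ (∀ Y ∈ freeVars φ, Ω X ≤ Ω Y) ∧ PA Ω φ
  | .nu X φ => Even (Ω X) ∧ (∀ Y ∈ freeVars φ, Ω X ≤ Ω Y) ∧ PA Ω φ
  | _ => True

/-- `φ` has a priority assignment with co-domain contained in `I`. -/
def HasIndexIn {Act : Type} (Ψ : Formula Act) (I : Set ℕ) : Prop :=
  ∃ Ω : ℕ → ℕ, PA Ω Ψ ∧ ∀ X ∈ fixVars Ψ, Ω X ∈ I

/-- The class `Σμ2`: formulas of index `{1,0}`. -/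
def IsSigma2 {Act : Type} (Ψ : Formula Act) : Prop := HasIndexIn Ψ {0, 1}

/-- The class `Πμ2`: formulas of index `{2,1}`. -/
def IsPi2 {Act : Type} (Ψ : Formula Act) : Prop := HasIndexIn Ψ {1, 2}

/-- `Ψ` is semantically in `Σμ2`: it is equivalent to some formula of index `{1,0}`. -/
def SemSigma2 {Act : Type} (Ψ : Formula Act) : Prop :=
  ∃ Φ : Formula Act, IsSigma2 Φ ∧ FEquiv Ψ Φ

/-- `Ψ` is semantically in `Πμ2`. -/
def SemPi2 {Act : Type} (Ψ : Formula Act) : Prop :=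
  ∃ Φ : Formula Act, IsPi2 Φ ∧ FEquiv Ψ Φ

/-- Syntactic subformula relation. -/
inductive Subf {Act : Type} : Formula Act → Formula Act → Prop
  | refl (φ : Formula Act) : Subf φ φ
  | andl {χ φ ψ : Formula Act} : Subf χ φ → Subf χ (.and φ ψ)
  | andr {χ φ ψ : Formula Act} : Subf χ ψ → Subf χ (.and φ ψ)
  | orl {χ φ ψ : Formula Act} : Subf χ φ → Subf χ (.or φ ψ)
  | orr {χ φ ψ : Formula Act} : Subf χ ψ → Subf χ (.or φ ψ)
  | dia {χ φ : Formula Act} {a : Act} : Subf χ φ → Subf χ (.dia a φ)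
  | box {χ φ : Formula Act} {a : Act} : Subf χ φ → Subf χ (.box a φ)
  | mu {χ φ : Formula Act} {X : ℕ} : Subf χ φ → Subf χ (.mu X φ)
  | nu {χ φ : Formula Act} {X : ℕ} : Subf χ φ → Subf χ (.nu X φ)

/-- `χ` is the binding formula of the fixpoint variable `X` in `Ψ`. -/
def BindsIn {Act : Type} (Ψ : Formula Act) (X : ℕ) (χ : Formula Act) : Prop :=
  Subf (.mu X χ) Ψ ∨ Subf (.nu X χ) Ψ

/-- The number of subformulas (size) of a formula. -/
def size {Act : Type} : Formula Act → ℕ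
  | .and φ ψ | .or φ ψ => size φ + size ψ + 1
  | .dia _ φ | .box _ φ | .mu _ φ | .nu _ φ => size φ + 1
  | _ => 1

/-- Every occurrence of `X` is in the scope of a modality. -/
def GuardedIn {Act : Type} (X : ℕ) : Formula Act → Prop
  | .var Y => Y ≠ X
  | .and φ ψ | .or φ ψ => GuardedIn X φ ∧ GuardedIn X ψ
  | .mu Y φ | .nu Y φ => Y = X ∨ GuardedIn X φ
  | _ => True

/-- A formula is guarded if every fixpoint variable is in the scope of a modality
within its binding. -/
def Guarded {Act : Type} : Formula Act → Prop
  | .and φ ψ | .or φ ψ => Guarded φ ∧ Guarded ψ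
  | .dia _ φ | .box _ φ => Guarded φ
  | .mu X φ | .nu X φ => GuardedIn X φ ∧ Guarded φ
  | _ => True

/-- Literals. -/
inductive IsLit {Act : Type} : Formula Act → Prop
  | prop (P : ℕ) : IsLit (.prop P)
  | nprop (P : ℕ) : IsLit (.nprop P)

/-- Finite conjunctions of literals. -/
inductive IsConjLit {Act : Type} : Formula Act → Prop
  | tt : IsConjLit .tt
  | lit {φ : Formula Act} : IsLit φ → IsConjLit φ
  | and {φ ψ : Formula Act} : IsConjLit φ → IsConjLit ψ → IsConjLit (.and φ ψ)

/-- Disjunction of a finite list of formulas. -/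
def orAll {Act : Type} : List (Formula Act) → Formula Act
  | [] => .ff
  | ψ :: l => .or ψ (orAll l)

/-- Conjunction of a finite list of formulas. -/
def andAll {Act : Type} : List (Formula Act) → Formula Act
  | [] => .tt
  | ψ :: l => .and ψ (andAll l)

/-- `→a B`: every formula of `B` holds at some `a`-successor and at every
`a`-successor some formula of `B` holds. -/
def arrowF {Act : Type} (a : Act) (B : List (Formula Act)) : Formula Act :=
  .and (andAll (B.map (.dia a))) (.box a (orAll B))

/-- The Odd-choice formula `A ∧ ⋀_{a ∈ l} →a (B a)`. -/
def oddChoiceF {Act : Type} (A : Formula Act) (l : List Act)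
    (B : Act → List (Formula Act)) : Formula Act :=
  .and A (andAll (l.map fun a => arrowF a (B a)))

/-- Formulas in disjunctive form. -/
inductive IsDisj {Act : Type} : Formula Act → Prop
  | tt : IsDisj .tt
  | ff : IsDisj .ff
  | var (X : ℕ) : IsDisj (.var X)
  | conj {φ : Formula Act} : IsConjLit φ → IsDisj φ
  | or {φ ψ : Formula Act} : IsDisj φ → IsDisj ψ → IsDisj (.or φ ψ)
  | oddChoice {A : Formula Act} {l : List Act} {B : Act → List (Formula Act)} :
      IsConjLit A → (∀ a : Act, a ∈ l) → l.Nodup →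
      (∀ a ψ, ψ ∈ B a → IsDisj ψ) → IsDisj (oddChoiceF A l B)
  | mu {X : ℕ} {φ : Formula Act} : IsDisj φ → IsDisj (.mu X φ)
  | nu {X : ℕ} {φ : Formula Act} : IsDisj φ → IsDisj (.nu X φ)

/-- An explicit injective encoding of formulas (over `Act = Fin k`) as natural
numbers, used to express computability. -/
def encodeFormula {k : ℕ} : Formula (Fin k) → ℕ
  | .tt => Nat.pair 0 0
  | .ff => Nat.pair 1 0
  | .prop P => Nat.pair 2 P
  | .nprop P => Nat.pair 3 P
  | .var X => Nat.pair 4 X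
  | .and φ ψ => Nat.pair 5 (Nat.pair (encodeFormula φ) (encodeFormula ψ))
  | .or φ ψ => Nat.pair 6 (Nat.pair (encodeFormula φ) (encodeFormula ψ))
  | .dia a φ => Nat.pair 7 (Nat.pair a.val (encodeFormula φ))
  | .box a φ => Nat.pair 8 (Nat.pair a.val (encodeFormula φ))
  | .mu X φ => Nat.pair 9 (Nat.pair X (encodeFormula φ))
  | .nu X φ => Nat.pair 10 (Nat.pair X (encodeFormula φ))



/-- A two-player game arena with a parity-style priority labelling and an
explicit winner for dead-end positions. -/
structure Game where
  Pos : Type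
  init : Pos
  evenOwns : Pos → Prop
  edge : Pos → Pos → Prop
  prio : Pos → ℕ
  finalWinEven : Pos → Prop

/-- A (history-dependent) strategy: given the history and the current position,
produce the next position. -/
abbrev Strategy (G : Game) : Type := List G.Pos → G.Pos → G.Pos

/-- A strategy is legal for the player owning the positions in `owns` if it always
moves along an edge whenever a move is available. -/
def LegalStrat (G : Game) (owns : G.Pos → Prop) (σ : Strategy G) : Prop :=
  ∀ (h : List G.Pos) (v : G.Pos), owns v → (∃ w, G.edge v w) → G.edge v (σ h v)

/-- A finite play prefix (of length `k`) consistent with the strategy `σ`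
of the player owning the positions in `owns`. -/
def PConsistent (G : Game) (owns : G.Pos → Prop) (σ : Strategy G) (k : ℕ)
    (p : ℕ → G.Pos) : Prop :=
  p 0 = G.init ∧ (∀ i, i < k → G.edge (p i) (p (i + 1))) ∧
    (∀ i, i < k → owns (p i) → p (i + 1) = σ ((List.range i).map p) (p i))

/-- An infinite play consistent with the strategy `σ`. -/
def InfConsistent (G : Game) (owns : G.Pos → Prop) (σ : Strategy G)
    (p : ℕ → G.Pos) : Prop :=
  p 0 = G.init ∧ (∀ i, G.edge (p i) (p (i + 1))) ∧
    (∀ i, owns (p i) → p (i + 1) = σ ((List.range i).map p) (p i))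

/-- A maximal finite play consistent with `σ`: it ends in a dead end. -/
def FinMaxConsistent (G : Game) (owns : G.Pos → Prop) (σ : Strategy G) (k : ℕ)
    (p : ℕ → G.Pos) : Prop :=
  PConsistent G owns σ k p ∧ ∀ w, ¬ G.edge (p k) w

/-- `d` is the dominant (greatest infinitely often occurring) value of `pr`. -/
def Dominant (pr : ℕ → ℕ) (d : ℕ) : Prop :=
  {i | pr i = d}.Infinite ∧ ∀ d', {i | pr i = d'}.Infinite → d' ≤ d

/-- The parity winning condition for Even on infinite plays. -/
def ParityWinInf (G : Game) (p : ℕ → G.Pos) : Prop :=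
  ∃ d, Dominant (fun i => G.prio (p i)) d ∧ Even d

/-- `σ` is a winning strategy for the player owning the positions in `owns`,
with dead-end winning condition `finalWin` and infinite-play winning
condition `W`. -/
def WinningStrat (G : Game) (owns finalWin : G.Pos → Prop)
    (W : (ℕ → G.Pos) → Prop) (σ : Strategy G) : Prop :=
  LegalStrat G owns σ ∧ (∀ p, InfConsistent G owns σ p → W p) ∧
    (∀ k p, FinMaxConsistent G owns σ k p → finalWin (p k))

/-- Even wins the parity game `G`. -/
def EvenWinsParity (G : Game) : Prop :=
  ∃ σ, WinningStrat G G.evenOwns G.finalWinEven (ParityWinInf G) σ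

/-- Odd wins the parity game `G`. -/
def OddWinsParity (G : Game) : Prop :=
  ∃ σ, WinningStrat G (fun v => ¬ G.evenOwns v) (fun v => ¬ G.finalWinEven v)
    (fun p => ¬ ParityWinInf G p) σ

/-- Position `x` is reached by some play prefix consistent with `σ`. -/
def ReachesPos (G : Game) (owns : G.Pos → Prop) (σ : Strategy G) (x : G.Pos) : Prop :=
  ∃ k p, PConsistent G owns σ k p ∧ p k = x

/-- Edges of the model-checking game `M × Ψ`. -/
def mcEdge {Act : Type} (M : LTS Act) (Ψ : Formula Act) :
    (M.State × Formula Act) → (M.State × Formula Act) → Prop := fun x y =>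
  match x.2 with
  | .and φ ψ => y.1 = x.1 ∧ (y.2 = φ ∨ y.2 = ψ)
  | .or φ ψ => y.1 = x.1 ∧ (y.2 = φ ∨ y.2 = ψ)
  | .dia a φ => y.2 = φ ∧ M.trans x.1 a y.1
  | .box a φ => y.2 = φ ∧ M.trans x.1 a y.1
  | .mu _ φ => y.1 = x.1 ∧ y.2 = φ
  | .nu _ φ => y.1 = x.1 ∧ y.2 = φ
  | .var X => y.1 = x.1 ∧ BindsIn Ψ X y.2
  | _ => False

/-- The model-checking parity game `M × Ψ`, for a priority assignment `Ω` on `Ψ`;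
`d0` is the minimal priority in the co-domain of `Ω`, assigned to non-variable
positions. -/
def mcGame {Act : Type} (M : LTS Act) (Ψ : Formula Act) (Ω : ℕ → ℕ) (d0 : ℕ) : Game where
  Pos := M.State × Formula Act
  init := (M.init, Ψ)
  evenOwns := fun x => match x.2 with
    | .and _ _ => False
    | .box _ _ => False
    | _ => True
  edge := mcEdge M Ψ
  prio := fun x => match x.2 with
    | .var X => Ω X
    | _ => d0
  finalWinEven := fun x => match x.2 with
    | .tt => True
    | .prop P => M.val x.1 P
    | .nprop P => ¬ M.val x.1 P
    | .box _ _ => True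
    | _ => False

/-- A configuration of the `n`-challenge game on a parity game with positions `P`:
the current position, the least open challenged (even) priority (`q+2` when all
challenges are met), the counter values, and the sub-round (`true` = Odd's turn
to open challenges). -/
structure CCfg (P : Type) where
  pos : P
  ptr : ℕ
  ctr : ℕ → ℕ
  rnd : Bool

/-- Updating the challenge configuration after a parity-game move to `v'`:
challenges of priority at most the seen priority are met, lower counters are
reset, and the game ends with an Even win (`none`) if a position of even
priority with exhausted counter is reached. -/
def chalUpdate (G : Game) (n : ℕ) (c : CCfg G.Pos) (v' : G.Pos) : Option (CCfg G.Pos) :=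
  let i := G.prio v'
  if Even i ∧ c.ctr i = 0 then none
  else some ⟨v', if c.ptr ≤ i then (if Even i then i + 2 else i + 1) else c.ptr,
    fun j => if c.ptr ≤ i ∧ j < i then n else c.ctr j, true⟩

/-- Odd's challenge-opening move: open all challenges of even priorities from
`c'.ptr` up to (excluding) `c.ptr`, in decreasing order, decrementing their
counters; all of these counters must be nonzero. -/
def chalOpenMove {P : Type} (c c' : CCfg P) : Prop :=
  c.rnd = true ∧ c'.rnd = false ∧ c'.pos = c.pos ∧
    Even c'.ptr ∧ c'.ptr ≤ c.ptr ∧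
    (∀ i, Even i → c'.ptr ≤ i → i < c.ptr → c.ctr i ≠ 0) ∧
    (∀ i, c'.ctr i = if Even i ∧ c'.ptr ≤ i ∧ i < c.ptr then c.ctr i - 1 else c.ctr i)

/-- The arena of the `n`-challenge game on the parity game `G` with priorities in
`{q,...,0}`, `q` even. The position `none` is the sink at which Even has won. -/
def chalGraph (G : Game) (q n : ℕ) : Game where
  Pos := Option (CCfg G.Pos)
  init := some ⟨G.init, q + 2, fun _ => n, true⟩
  evenOwns := fun x => match x with
    | none => True
    | some c => if c.rnd then False else G.evenOwns c.pos
  edge := fun x y => match x with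
    | none => False
    | some c =>
        if c.rnd then ∃ c', y = some c' ∧ chalOpenMove c c'
        else ∃ v', G.edge c.pos v' ∧ y = chalUpdate G n c v'
  prio := fun x => match x with
    | none => 0
    | some c => G.prio c.pos
  finalWinEven := fun x => match x with
    | none => True
    | some c => G.finalWinEven c.pos

/-- Winning condition for Even on infinite plays of the `n`-challenge game:
whenever `d` is the dominant priority of the underlying sequence of parity-game
positions, infinitely many round-0 configurations have all challenges of
priorities `≤ d+1` met (equivalently: every opened `d+1`-challenge is eventually
met or reset; in particular this holds when `d` is even). -/
def ChalWinInf (G : Game) (q n : ℕ) (p : ℕ → Option (CCfg G.Pos)) : Prop :=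
  ∀ d, Dominant (fun t => (chalGraph G q n).prio (p t)) d →
    {t | ∃ c, p t = some c ∧ c.rnd = false ∧ d + 1 < c.ptr}.Infinite

/-- Even wins the `n`-challenge game on the parity game `G` (of index `{q,...,0}`,
`q` even). -/
def EvenWinsChallenge (G : Game) (q n : ℕ) : Prop :=
  ∃ σ, WinningStrat (chalGraph G q n) (chalGraph G q n).evenOwns
    (chalGraph G q n).finalWinEven (ChalWinInf G q n) σ

/-- Bisimilarity of labelled transition systems. -/
def Bisimilar {Act : Type} (M N : LTS Act) : Prop :=
  ∃ R : M.State → N.State → Prop, R M.init N.init ∧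
    ∀ s t, R s t → (∀ P, M.val s P ↔ N.val t P) ∧
      (∀ a s', M.trans s a s' → ∃ t', N.trans t a t' ∧ R s' t') ∧
      (∀ a t', N.trans t a t' → ∃ s', M.trans s a s' ∧ R s' t')

/-- A strategy for Even in `M × Ψ` is well-behaved if it reaches each state of `M`
at either one subformula or none (so it agrees with at most one play along each
branch). -/
def WellBehavedMC {Act : Type} (M : LTS Act) (Ψ : Formula Act) (Ω : ℕ → ℕ) (d0 : ℕ)
    (σ : Strategy (mcGame M Ψ Ω d0)) : Prop :=
  ∀ (s : M.State) (φ φ' : Formula Act),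
    ReachesPos (mcGame M Ψ Ω d0) (mcGame M Ψ Ω d0).evenOwns σ (s, φ) →
    ReachesPos (mcGame M Ψ Ω d0) (mcGame M Ψ Ω d0).evenOwns σ (s, φ') → φ = φ'

/-- Modal formulas (decidably). -/
def isModalF {Act : Type} : Formula Act → Bool
  | .dia _ _ | .box _ _ => true
  | _ => false



section Aux

/-- Extract the underlying parity-game history from a challenge-game history. -/
def extractHist (G : Game) (h : List (Option (CCfg G.Pos))) : List G.Pos :=
  h.filterMap fun x => x.bind fun c => if c.rnd then none else some c.pos

/-- The underlying parity-game play of a challenge-game play. -/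
def underlying (G : Game) (p : ℕ → Option (CCfg G.Pos)) (j : ℕ) : G.Pos :=
  match p (2*j) with
  | some c => c.pos
  | none => G.init

/-- Even's strategy in the challenge game simulating `σ`. -/
def tauStrat (G : Game) (n : ℕ) (σ : Strategy G) :
    List (Option (CCfg G.Pos)) → Option (CCfg G.Pos) → Option (CCfg G.Pos) :=
  fun h x => match x with
  | none => none
  | some c => if c.rnd then some { c with rnd := false }
      else chalUpdate G n c (σ (extractHist G h) c.pos)

lemma chalUpdate_eq_some {G : Game} {n : ℕ} {c : CCfg G.Pos} {v' : G.Pos}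
    {c' : CCfg G.Pos} (h : chalUpdate G n c v' = some c') :
    ¬ (Even (G.prio v') ∧ c.ctr (G.prio v') = 0) ∧
    c' = ⟨v', if c.ptr ≤ G.prio v' then (if Even (G.prio v') then G.prio v' + 2
        else G.prio v' + 1) else c.ptr,
      fun j => if c.ptr ≤ G.prio v' ∧ j < G.prio v' then n else c.ctr j, true⟩ := by
  simp only [chalUpdate] at h
  split at h
  · exact absurd h (by simp)
  · exact ⟨by assumption, (Option.some.injEq _ _ ▸ h).symm⟩

lemma extractHist_append {G : Game} (h₁ h₂ : List (Option (CCfg G.Pos))) :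
    extractHist G (h₁ ++ h₂) = extractHist G h₁ ++ extractHist G h₂ :=
  List.filterMap_append

lemma extractHist_nil {G : Game} : extractHist G [] = [] := rfl

lemma extractHist_singleton_true {G : Game} {c : CCfg G.Pos} (h : c.rnd = true) :
    extractHist G [some c] = [] := by simp [extractHist, h]

lemma extractHist_singleton_false {G : Game} {c : CCfg G.Pos} (h : c.rnd = false) :
    extractHist G [some c] = [c.pos] := by simp [extractHist, h]

lemma extractHist_singleton_none {G : Game} :
    extractHist G [(none : Option (CCfg G.Pos))] = [] := rfl


def okCfg (G : Game) (p : ℕ → Option (CCfg G.Pos)) (t : ℕ) (b : Bool) : Prop :=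
  ∃ c, p t = some c ∧ c.rnd = b ∧ c.pos = underlying G p (t/2) ∧ Even c.ptr

lemma sim (G : Game) (q n : ℕ) (σ : Strategy G) (hq : Even q)
    (p : ℕ → Option (CCfg G.Pos)) (k : ℕ)
    (h0 : p 0 = some ⟨G.init, q + 2, fun _ => n, true⟩)
    (he : ∀ i < k, (chalGraph G q n).edge (p i) (p (i+1)))
    (hc : ∀ i < k, (chalGraph G q n).evenOwns (p i) →
      p (i+1) = tauStrat G n σ ((List.range i).map p) (p i)) :
    ∀ t ≤ k,
      ((t % 2 = 1 → okCfg G p t false) ∧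
       (t % 2 = 0 → p t = none ∨ okCfg G p t true)) ∧
      extractHist G ((List.range t).map p) =
        (List.range (t/2)).map (underlying G p) ∧
      (∀ j, 2*j+2 ≤ t → (∃ c, p (2*j+2) = some c) →
        G.edge (underlying G p j) (underlying G p (j+1)) ∧
        (G.evenOwns (underlying G p j) →
          underlying G p (j+1) = σ ((List.range j).map (underlying G p)) (underlying G p j))) := by
  intro t
  induction t with
  | zero =>
    intro _
    refine ⟨⟨by omega, fun _ => Or.inr ⟨_, h0, rfl, ?_, ?_⟩⟩, by simp [extractHist], by omega⟩
    · show G.init = underlying G p 0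
      simp [underlying, h0]
    · exact hq.add ⟨1, rfl⟩
  | succ t ih =>
    intro hk
    obtain ⟨⟨hA, hB⟩, hC, hD⟩ := ih (by omega)
    have het := he t (by omega)
    rcases Nat.even_or_odd t with hpar | hpar
    · -- t even : open move
      have ht2 : t % 2 = 0 := Nat.even_iff.mp hpar
      rcases hB ht2 with hnone | ⟨c, hpc, hrnd, hpos, hptr⟩
      · rw [hnone] at het; exact absurd het (by simp [chalGraph])
      rw [hpc] at het
      have het' : ∃ c', p (t+1) = some c' ∧ chalOpenMove c c' := by
        simpa [chalGraph, hrnd] using het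
      obtain ⟨c', hpc', hopen⟩ := het'
      obtain ⟨-, hrnd', hposeq, hptrEv, -, -, -⟩ := hopen
      have hdiv : (t+1)/2 = t/2 := by omega
      refine ⟨⟨fun _ => ⟨c', hpc', hrnd', by rw [hposeq, hpos, hdiv], hptrEv⟩, by omega⟩, ?_, ?_⟩
      · rw [List.range_succ, List.map_append, extractHist_append, hC, hdiv]
        simp [hpc, extractHist_singleton_true hrnd]
      · intro j hj hsome
        exact hD j (by omega) hsome
    · -- t odd : update move
      have ht2 : t % 2 = 1 := Nat.odd_iff.mp hpar
      obtain ⟨c, hpc, hrnd, hpos, hptr⟩ := hA ht2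
      rw [hpc] at het
      have het' : ∃ v', G.edge c.pos v' ∧ p (t+1) = chalUpdate G n c v' := by
        simpa [chalGraph, hrnd] using het
      obtain ⟨v', hev', hupd⟩ := het'
      have hdiv : (t+1)/2 = t/2 + 1 := by omega
      have h2t : 2 * ((t+1)/2) = t + 1 := by omega
      have hCnew : extractHist G ((List.range (t+1)).map p) =
          (List.range ((t+1)/2)).map (underlying G p) := by
        rw [List.range_succ, List.map_append, extractHist_append, hC, hdiv,
          List.range_succ, List.map_append]
        simp [hpc, extractHist_singleton_false hrnd, hpos]
      rcases hup : p (t+1) with _ | c'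
      · refine ⟨⟨by omega, fun _ => Or.inl rfl⟩, hCnew, ?_⟩
        intro j hj hsome
        rcases Nat.lt_or_ge (2*j+2) (t+1) with h' | h'
        · exact hD j (by omega) hsome
        · obtain ⟨c'', hc''⟩ := hsome
          have hjt : 2*j+2 = t+1 := by omega
          rw [hjt, hup] at hc''
          exact absurd hc'' (by simp)
      · rw [hup] at hupd
        obtain ⟨hctr0, hc'eq⟩ := chalUpdate_eq_some hupd.symm
        have hposc' : c'.pos = underlying G p ((t+1)/2) := by
          simp [underlying, h2t, hup]
        have hptrc' : Even c'.ptr := by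
          rw [hc'eq]
          dsimp only
          split
          · split
            · next hev => obtain ⟨a, ha⟩ := hev; exact ⟨a+1, by omega⟩
            · next hnev => exact Nat.even_add_one.mpr hnev
          · exact hptr
        refine ⟨⟨by omega, fun _ => Or.inr ⟨c', hup, by rw [hc'eq], hposc', hptrc'⟩⟩,
          hCnew, ?_⟩
        intro j hj hsome
        rcases Nat.lt_or_ge (2*j+2) (t+1) with h' | h'
        · exact hD j (by omega) hsome
        · have hjt : 2*j+2 = t+1 := by omega
          have hjj : j = t/2 := by omega
          have hv' : underlying G p (j+1) = v' := by
            have h2j : 2*(j+1) = t+1 := by omega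
            simp [underlying, h2j, hup, hc'eq]
          have huj : underlying G p j = c.pos := by rw [hjj, ← hpos]
          constructor
          · rw [hv', huj]; exact hev'
          · intro how
            have hcown : (chalGraph G q n).evenOwns (p t) := by
              rw [hpc]
              show (if c.rnd then False else G.evenOwns c.pos)
              rw [hrnd]
              simpa [huj] using how
            have htau := hc t (by omega) hcown
            rw [hpc] at htau
            have htau' : p (t+1) = chalUpdate G n c
                (σ (extractHist G ((List.range t).map p)) c.pos) := by
              simpa [tauStrat, hrnd] using htau
            rw [hup, hC] at htau'
            obtain ⟨-, hc'eq2⟩ := chalUpdate_eq_some htau'.symm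
            have hw : v' = σ ((List.range (t/2)).map (underlying G p)) c.pos := by
              have h1 : c'.pos = v' := by rw [hc'eq]
              have h2 := congrArg CCfg.pos hc'eq2
              rw [h1] at h2
              exact h2
            rw [hv', huj, hjj]
            exact hw



lemma tau_legal (G : Game) (q n : ℕ) (σ : Strategy G)
    (hσ : LegalStrat G G.evenOwns σ) :
    LegalStrat (chalGraph G q n) (chalGraph G q n).evenOwns (tauStrat G n σ) := by
  intro h x hown hex
  match x with
  | none =>
    obtain ⟨w, hw⟩ := hex
    exact absurd hw (by simp [chalGraph])
  | some c =>
    by_cases hr : c.rnd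
    · exact absurd hown (by simp [chalGraph, hr])
    · have hr' : c.rnd = false := by simpa using hr
      have hown' : G.evenOwns c.pos := by simpa [chalGraph, hr'] using hown
      obtain ⟨w, hw⟩ := hex
      have hwex : ∃ v', G.edge c.pos v' := by
        have hw' : ∃ v', G.edge c.pos v' ∧ w = chalUpdate G n c v' := by
          simpa [chalGraph, hr'] using hw
        exact ⟨hw'.choose, hw'.choose_spec.1⟩
      have hmove := hσ (extractHist G h) c.pos hown' hwex
      have hrw : (chalGraph G q n).edge (some c) (tauStrat G n σ h (some c)) ↔
          ∃ v', G.edge c.pos v' ∧ tauStrat G n σ h (some c) = chalUpdate G n c v' := by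
        simp [chalGraph, hr']
      rw [hrw]
      exact ⟨_, hmove, by simp [tauStrat, hr']⟩

lemma dominant_unique {f : ℕ → ℕ} {a b : ℕ} (ha : Dominant f a) (hb : Dominant f b) :
    a = b :=
  le_antisymm (hb.2 a ha.1) (ha.2 b hb.1)

lemma dominant_halve {f : ℕ → ℕ} {d : ℕ} (h : Dominant f d) :
    Dominant (fun t => f (t/2)) d := by
  constructor
  · have hsub : (fun j => 2*j) '' {j | f j = d} ⊆ {t | f (t/2) = d} := by
      rintro t ⟨j, hj, rfl⟩
      simpa [Nat.mul_div_cancel_left j (by norm_num : 0 < 2)] using hj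
    exact Set.Infinite.mono hsub
      (Set.Infinite.image (Set.injOn_of_injective (fun a b hab => by omega)) h.1)
  · intro d' hd'
    refine h.2 d' ?_
    by_contra hfin
    rw [Set.not_infinite] at hfin
    have hsub : {t | f (t/2) = d'} ⊆
        ((fun j => 2*j) '' {j | f j = d'}) ∪ ((fun j => 2*j+1) '' {j | f j = d'}) := by
      intro t ht
      rcases Nat.even_or_odd t with he | ho
      · exact Or.inl ⟨t/2, ht, by obtain ⟨a, ha⟩ := he; show 2*(t/2) = t; omega⟩
      · exact Or.inr ⟨t/2, ht, by obtain ⟨a, ha⟩ := ho; show 2*(t/2)+1 = t; omega⟩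
    exact hd' (Set.Finite.subset ((hfin.image _).union (hfin.image _)) hsub)

lemma no_strict_decrease (f : ℕ → ℕ) (T : ℕ)
    (hmono : ∀ t, T ≤ t → f (t+1) ≤ f t)
    (hdec : ∀ N, ∃ t, N ≤ t ∧ T ≤ t ∧ f (t+1) < f t) : False := by
  have anti : ∀ s k, T ≤ s → f (s+k) ≤ f s := by
    intro s k hs
    induction k with
    | zero => exact le_refl _
    | succ k ih => exact le_trans (hmono (s+k) (by omega)) ih
  have main : ∀ m, ∃ t, T ≤ t ∧ f t + m ≤ f T := by
    intro m
    induction m with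
    | zero => exact ⟨T, le_refl T, by omega⟩
    | succ m ih =>
      obtain ⟨t, hTt, hft⟩ := ih
      obtain ⟨t', htt', hTt', hlt⟩ := hdec t
      have h1 : f t' ≤ f t := by
        have h2 := anti t (t'-t) hTt
        rwa [Nat.add_sub_cancel' htt'] at h2
      exact ⟨t'+1, by omega, by omega⟩
  obtain ⟨t, hTt, hcon⟩ := main (f T + 1)
  omega


end Aux


/-- For every parity game `G` with priorities in `{q,...,0}`, `q`
even (finite plays won by Even iff the final priority is even), and every `n`:
if Even wins `G` then Even wins the `n`-challenge game on `G`. -/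
theorem even_parity_win_implies_challenge_win (G : Game) (q n : ℕ)
    (hq : Even q) (hprio : ∀ v, G.prio v ≤ q)
    (hfin : ∀ v, G.finalWinEven v ↔ Even (G.prio v)) :
    EvenWinsParity G → EvenWinsChallenge G q n := by
  rintro ⟨σ, hleg, hinfW, hfmaxW⟩
  refine ⟨tauStrat G n σ, tau_legal G q n σ hleg, ?_, ?_⟩
  · -- infinite plays
    rintro p ⟨hp0, hpe, hpc⟩
    have h0' : p 0 = some ⟨G.init, q + 2, fun _ => n, true⟩ := hp0
    have hsim := fun k => sim G q n σ hq p k h0' (fun i _ => hpe i) (fun i _ => hpc i)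
    have simAll := fun t => hsim t t le_rfl
    set v := underlying G p with hv
    have hsome : ∀ t, ∃ c, p t = some c := by
      intro t
      obtain ⟨⟨hA, hB⟩, -, -⟩ := simAll t
      rcases Nat.even_or_odd t with hpar | hpar
      · rcases hB (Nat.even_iff.mp hpar) with hnone | ⟨c, hpc', -⟩
        · have hedge := hpe t
          rw [hnone] at hedge
          exact absurd hedge (by simp [chalGraph])
        · exact ⟨c, hpc'⟩
      · obtain ⟨c, hpc', -⟩ := hA (Nat.odd_iff.mp hpar)
        exact ⟨c, hpc'⟩
    choose cfg hcfg using hsome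
    have hceq : ∀ t c, p t = some c → c = cfg t := by
      intro t c h
      rw [hcfg t] at h
      exact (Option.some_inj.mp h).symm
    have hfact : ∀ t,
        (t % 2 = 1 → (cfg t).rnd = false ∧ (cfg t).pos = v (t/2) ∧ Even (cfg t).ptr) ∧
        (t % 2 = 0 → (cfg t).rnd = true ∧ (cfg t).pos = v (t/2) ∧ Even (cfg t).ptr) := by
      intro t
      obtain ⟨⟨hA, hB⟩, -, -⟩ := simAll t
      constructor
      · intro h1
        obtain ⟨c, hpc', h2, h3, h4⟩ := hA h1
        obtain rfl := hceq t c hpc'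
        exact ⟨h2, h3, h4⟩
      · intro h0t
        rcases hB h0t with hnone | ⟨c, hpc', h2, h3, h4⟩
        · exact absurd (hnone.symm.trans (hcfg t)) (by simp)
        · obtain rfl := hceq t c hpc'
          exact ⟨h2, h3, h4⟩
    have hpos : ∀ t, (cfg t).pos = v (t/2) := by
      intro t
      rcases Nat.even_or_odd t with h | h
      · exact ((hfact t).2 (Nat.even_iff.mp h)).2.1
      · exact ((hfact t).1 (Nat.odd_iff.mp h)).2.1
    have hvic : InfConsistent G G.evenOwns σ v := by
      refine ⟨?_, ?_, ?_⟩
      · show v 0 = G.init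
        simp [hv, underlying, h0']
      · intro j
        obtain ⟨-, -, hD⟩ := simAll (2*j+2)
        exact (hD j le_rfl ⟨cfg (2*j+2), hcfg _⟩).1
      · intro j hown
        obtain ⟨-, -, hD⟩ := simAll (2*j+2)
        exact (hD j le_rfl ⟨cfg (2*j+2), hcfg _⟩).2 hown
    obtain ⟨d, hdom, hde⟩ := hinfW v hvic
    intro d' hdom'
    have hpr : ∀ t, (chalGraph G q n).prio (p t) = G.prio (v (t/2)) := by
      intro t
      rw [hcfg t]
      show G.prio ((cfg t).pos) = G.prio (v (t/2))
      rw [hpos t]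
    have hdomp : Dominant (fun t => (chalGraph G q n).prio (p t)) d := by
      rw [show (fun t => (chalGraph G q n).prio (p t)) = fun t => G.prio (v (t/2))
        from funext hpr]
      exact dominant_halve hdom
    rw [dominant_unique hdom' hdomp]
    by_contra hninf
    rw [Set.not_infinite] at hninf
    obtain ⟨T1, hT1⟩ := hninf.bddAbove
    have hub : ∀ t, T1 < t → t % 2 = 1 → (cfg t).ptr ≤ d := by
      intro t ht hodd
      obtain ⟨hrnd', -, hptrEv⟩ := (hfact t).1 hodd
      by_contra hgt
      push_neg at hgt
      have hevptr := Nat.even_iff.mp hptrEv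
      have hevd := Nat.even_iff.mp hde
      have htin : t ∈ {t | ∃ c, p t = some c ∧ c.rnd = false ∧ d + 1 < c.ptr} :=
        ⟨cfg t, hcfg t, hrnd', by omega⟩
      exact absurd (hT1 htin) (by omega)
    have hgtfin : {t | d < (chalGraph G q n).prio (p t)}.Finite := by
      have hsub : {t | d < (chalGraph G q n).prio (p t)} ⊆
          ⋃ e ∈ Finset.Icc (d+1) q, {t | (chalGraph G q n).prio (p t) = e} := by
        intro t ht
        simp only [Set.mem_iUnion, Set.mem_setOf_eq]
        refine ⟨(chalGraph G q n).prio (p t), ?_, rfl⟩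
        have hle : (chalGraph G q n).prio (p t) ≤ q := by
          rw [hpr t]; exact hprio _
        rw [Finset.mem_Icc]
        exact ⟨ht, hle⟩
      refine Set.Finite.subset (Set.Finite.biUnion (Finset.finite_toSet _) ?_) hsub
      intro e he
      by_contra hinf'
      have hinf'' : {t | (chalGraph G q n).prio (p t) = e}.Infinite := hinf'
      have := hdomp.2 e hinf''
      simp only [Finset.coe_Icc, Set.mem_Icc] at he
      omega
    obtain ⟨T2, hT2⟩ := hgtfin.bddAbove
    have hT2' : ∀ t, T2 < t → (chalGraph G q n).prio (p t) ≤ d := by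
      intro t ht
      by_contra hgt
      push_neg at hgt
      exact absurd (hT2 hgt) (by omega)
    set f : ℕ → ℕ := fun t => (cfg t).ctr d with hf
    have hstep : ∀ t, (t % 2 = 0 → chalOpenMove (cfg t) (cfg (t+1))) ∧
        (t % 2 = 1 → chalUpdate G n (cfg t) ((cfg (t+1)).pos) = some (cfg (t+1))) := by
      intro t
      have hedge := hpe t
      rw [hcfg t, hcfg (t+1)] at hedge
      constructor
      · intro h0t
        have hr : (cfg t).rnd = true := ((hfact t).2 h0t).1
        have hedge' : ∃ c', (some (cfg (t+1)) : Option (CCfg G.Pos)) = some c' ∧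
            chalOpenMove (cfg t) c' := by
          simpa [chalGraph, hr] using hedge
        obtain ⟨c', hc', ho⟩ := hedge'
        obtain rfl : c' = cfg (t+1) := (Option.some_inj.mp hc').symm
        exact ho
      · intro h1t
        have hr : (cfg t).rnd = false := ((hfact t).1 h1t).1
        have hedge' : ∃ v', G.edge (cfg t).pos v' ∧
            (some (cfg (t+1)) : Option (CCfg G.Pos)) = chalUpdate G n (cfg t) v' := by
          simpa [chalGraph, hr] using hedge
        obtain ⟨v', hev, hupd⟩ := hedge'
        obtain ⟨-, hc'eq⟩ := chalUpdate_eq_some hupd.symm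
        have hp' : (cfg (t+1)).pos = v' := by rw [hc'eq]
        rw [hp']
        exact hupd.symm
    have hmono : ∀ t, max T1 T2 + 1 ≤ t → f (t+1) ≤ f t := by
      intro t ht
      rcases Nat.even_or_odd t with hpar | hpar
      · have ho := (hstep t).1 (Nat.even_iff.mp hpar)
        have hctr := ho.2.2.2.2.2.2 d
        show (cfg (t+1)).ctr d ≤ (cfg t).ctr d
        rw [hctr]
        split
        · omega
        · exact le_refl _
      · have hu := (hstep t).2 (Nat.odd_iff.mp hpar)
        obtain ⟨-, hc'eq⟩ := chalUpdate_eq_some hu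
        have hile : G.prio ((cfg (t+1)).pos) ≤ d := by
          have h2 := hT2' (t+1) (by omega)
          rw [hcfg (t+1)] at h2
          exact h2
        show (cfg (t+1)).ctr d ≤ (cfg t).ctr d
        rw [hc'eq]
        show (if (cfg t).ptr ≤ G.prio ((cfg (t+1)).pos) ∧ d < G.prio ((cfg (t+1)).pos)
          then n else (cfg t).ctr d) ≤ (cfg t).ctr d
        rw [if_neg (fun hcon => by omega)]
    have hdec : ∀ N, ∃ t, N ≤ t ∧ max T1 T2 + 1 ≤ t ∧ f (t+1) < f t := by
      intro N
      obtain ⟨j, hjset, hjgt⟩ := hdom.1.exists_gt (N + max T1 T2 + 2)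
      set s := 2*j - 1 with hs
      have hsodd : s % 2 = 1 := by omega
      have hs1 : (s+1)/2 = j := by omega
      have hs2 : (s+1) % 2 = 0 := by omega
      have hub1 : (cfg s).ptr ≤ d := hub s (by omega) hsodd
      have hupd := (hstep s).2 hsodd
      obtain ⟨hnz, hceq1⟩ := chalUpdate_eq_some hupd
      have hi : G.prio ((cfg (s+1)).pos) = d := by
        rw [hpos (s+1), hs1]
        exact hjset
      rw [hi] at hnz hceq1
      have hnz' : (cfg s).ctr d ≠ 0 := fun h => hnz ⟨hde, h⟩
      have hptr1 : (cfg (s+1)).ptr = d + 2 := by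
        rw [hceq1]
        show (if (cfg s).ptr ≤ d then (if Even d then d + 2 else d + 1) else (cfg s).ptr) = d + 2
        rw [if_pos hub1, if_pos hde]
      have hctr1 : (cfg (s+1)).ctr d = (cfg s).ctr d := by
        rw [hceq1]
        show (if (cfg s).ptr ≤ d ∧ d < d then n else (cfg s).ctr d) = (cfg s).ctr d
        rw [if_neg (fun hcon => by omega)]
      have ho := (hstep (s+1)).1 hs2
      have hctr2 := ho.2.2.2.2.2.2 d
      have hub2 : (cfg (s+2)).ptr ≤ d := hub (s+2) (by omega) (by omega)
      rw [if_pos ⟨hde, hub2, by omega⟩] at hctr2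
      refine ⟨s+1, by omega, by omega, ?_⟩
      show (cfg (s+2)).ctr d < (cfg (s+1)).ctr d
      rw [hctr2, hctr1]
      omega
    exact no_strict_decrease f (max T1 T2 + 1) hmono hdec
  · -- finite maximal plays
    rintro k p ⟨⟨hp0, hpe, hpc⟩, hmax⟩
    have h0' : p 0 = some ⟨G.init, q + 2, fun _ => n, true⟩ := hp0
    have hsim := sim G q n σ hq p k h0' hpe hpc
    obtain ⟨⟨hA, hB⟩, hC, hD⟩ := hsim k le_rfl
    rcases Nat.even_or_odd k with hpar | hpar
    · rcases hB (Nat.even_iff.mp hpar) with hnone | ⟨c, hpc', hrnd, hpos, hptr⟩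
      · rw [hnone]
        show True
        trivial
      · exfalso
        apply hmax (some ⟨c.pos, c.ptr, c.ctr, false⟩)
        rw [hpc']
        have hrw : (chalGraph G q n).edge (some c) (some ⟨c.pos, c.ptr, c.ctr, false⟩) ↔
            ∃ c', (some ⟨c.pos, c.ptr, c.ctr, false⟩ : Option (CCfg G.Pos)) = some c' ∧
              chalOpenMove c c' := by
          simp [chalGraph, hrnd]
        rw [hrw]
        refine ⟨_, rfl, hrnd, rfl, rfl, hptr, le_refl _, fun i _ h1 h2 => absurd (lt_of_le_of_lt h1 h2) (lt_irrefl c.ptr), ?_⟩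
        intro i
        show c.ctr i = (if Even i ∧ c.ptr ≤ i ∧ i < c.ptr then c.ctr i - 1 else c.ctr i)
        rw [if_neg (fun hcon => by omega)]
    · obtain ⟨c, hpc', hrnd, hpos, hptr⟩ := hA (Nat.odd_iff.mp hpar)
      have hdeadG : ∀ w, ¬ G.edge c.pos w := by
        intro w hw
        apply hmax (chalUpdate G n c w)
        rw [hpc']
        have hrw : (chalGraph G q n).edge (some c) (chalUpdate G n c w) ↔
            ∃ v', G.edge c.pos v' ∧ chalUpdate G n c w = chalUpdate G n c v' := by
          simp [chalGraph, hrnd]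
        rw [hrw]
        exact ⟨w, hw, rfl⟩
      have hk1 : k % 2 = 1 := Nat.odd_iff.mp hpar
      have hk : k = 2*(k/2)+1 := by omega
      have hsomet : ∀ t, t < k → ∃ c', p t = some c' := by
        intro t htk
        obtain ⟨⟨hA', hB'⟩, -, -⟩ := hsim t (le_of_lt htk)
        rcases Nat.even_or_odd t with h | h
        · rcases hB' (Nat.even_iff.mp h) with hnone | ⟨c', h', -⟩
          · exfalso
            have hedge := hpe t htk
            rw [hnone] at hedge
            exact absurd hedge (by simp [chalGraph])
          · exact ⟨c', h'⟩
        · obtain ⟨c', h', -⟩ := hA' (Nat.odd_iff.mp h)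
          exact ⟨c', h'⟩
      have hvcons : PConsistent G G.evenOwns σ (k/2) (underlying G p) := by
        refine ⟨?_, ?_, ?_⟩
        · simp [underlying, h0']
        · intro i hi
          exact (hD i (by omega) (hsomet (2*i+2) (by omega))).1
        · intro i hi hown
          exact (hD i (by omega) (hsomet (2*i+2) (by omega))).2 hown
      have hdeadv : ∀ w, ¬ G.edge (underlying G p (k/2)) w := by
        intro w hw
        rw [← hpos] at hw
        exact hdeadG w hw
      have hwin := hfmaxW (k/2) (underlying G p) ⟨hvcons, hdeadv⟩
      show (chalGraph G q n).finalWinEven (p k)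
      rw [hpc']
      show G.finalWinEven c.pos
      rw [hpos]
      exact hwin



end MuCalc
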